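/- arXiv:math/0509399 — 2 statements merged into one kernel-verified Lean document; each statement's English description precedes it below -/
import Mathlib

section
/- Let R be an irreducible finite reduced crystallographic root system with base B of cardinality r and Weyl group W. Let λ be a nonzero dominant element of the rational span of R, and let w ∈ W be expressible as a product of fewer than r simple reflections. Then w(λ) is not of the form −Σ_{α∈B} a_α·α with all coefficients a_α ≥ 0. -/
open scoped RealInnerProductSpace

variable {V : Type*} [NormedAddCommGroup V] [InnerProductSpace ℝ V]

/-- The reflection in the hyperplane orthogonal to `α`:
`x ↦ x - (2⟪α, x⟫/⟪α, α⟫) α`. -/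
noncomputable def reflVec (α x : V) : V :=
  x - ((2 * ⟪α, x⟫) / ⟪α, α⟫) • α

/-- `v` is a linear combination of the elements of `B` with nonnegative
coefficients. -/
def IsNonnegComb (B : Finset V) (v : V) : Prop :=
  ∃ c : V → ℝ, (∀ α, 0 ≤ c α) ∧ v = ∑ α ∈ B, c α • α

/-- A finite reduced crystallographic root system `R` in a Euclidean space `V`,
together with a base (system of simple roots) `B` and the simple reflections
`s α` (realized as linear automorphisms of `V`). -/
structure RootSystemData (V : Type*) [NormedAddCommGroup V]
    [InnerProductSpace ℝ V] where
  /-- the (finite) set of roots -/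
  R : Finset V
  /-- the base (system of simple roots) -/
  B : Finset V
  /-- the reflections: `s α` is the reflection in the hyperplane orthogonal
  to `α` (see `s_apply`) -/
  s : V → (V ≃ₗ[ℝ] V)
  zero_not_mem : (0 : V) ∉ R
  base_subset : B ⊆ R
  base_indep : LinearIndependent ℝ (fun b : {x // x ∈ B} => (b : V))
  /-- reduced: the only multiples of a root `α` that are roots are `±α` -/
  reduced : ∀ α ∈ R, ∀ c : ℝ, c • α ∈ R → c = 1 ∨ c = -1
  /-- crystallographic: `⟨β, α∨⟩ = 2⟪α, β⟫/⟪α, α⟫` is an integer -/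
  crystallographic : ∀ α ∈ R, ∀ β ∈ R, ∃ n : ℤ, 2 * ⟪α, β⟫ = (n : ℝ) * ⟪α, α⟫
  /-- `R` is stable under the reflections in its elements -/
  reflection_mem : ∀ α ∈ R, ∀ β ∈ R, reflVec α β ∈ R
  /-- `s α` is the reflection in the hyperplane orthogonal to `α` -/
  s_apply : ∀ α ∈ R, ∀ x : V, s α x = reflVec α x
  /-- every root is a nonnegative or a nonpositive combination of the base -/
  pos_or_neg : ∀ β ∈ R, IsNonnegComb B β ∨ IsNonnegComb B (-β)

/-- The positive roots: the roots which are nonnegative combinations of the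
base. -/
noncomputable def posRoots (P : RootSystemData V) : Finset V :=
  @Finset.filter V (fun v => IsNonnegComb P.B v) (Classical.decPred _) P.R

/-- The set of simple reflections. -/
def simples (P : RootSystemData V) : Set (V ≃ₗ[ℝ] V) :=
  P.s '' (P.B : Set V)

/-- The Weyl group: the subgroup of `GL(V)` generated by the simple
reflections. -/
def weylGroup (P : RootSystemData V) : Subgroup (V ≃ₗ[ℝ] V) :=
  Subgroup.closure (simples P)

/-- The length of `w` with respect to a generating set `S`: the least number of
factors in an expression of `w` as a product of elements of `S`. -/
noncomputable def lengthIn {G : Type*} [Group G] (S : Set G) (w : G) : ℕ :=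
  sInf {n | ∃ l : List G, l.length = n ∧ (∀ x ∈ l, x ∈ S) ∧ l.prod = w}

/-- The Dynkin diagram on a set `I` of simple roots: vertices are the elements
of `I`, with an edge between two distinct roots exactly when they are not
orthogonal. -/
def dynkinOn (I : Finset V) : SimpleGraph {x // x ∈ I} where
  Adj a b := a ≠ b ∧ ⟪(a : V), (b : V)⟫ ≠ 0
  symm := by
    constructor
    intro a b h
    refine ⟨h.1.symm, ?_⟩
    rw [real_inner_comm]
    exact h.2
  loopless := by
    constructor
    intro a h
    exact h.1 rfl

/-- `ρ`, the half-sum of the positive roots. -/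
noncomputable def halfSumPos (P : RootSystemData V) : V :=
  (2⁻¹ : ℝ) • ∑ β ∈ posRoots P, β


section Aux
variable {V : Type*} [NormedAddCommGroup V] [InnerProductSpace ℝ V]

lemma my_inner_self_pos (x : V) (h : x ≠ 0) : (0:ℝ) < ⟪x,x⟫ := by
  rw [real_inner_self_eq_norm_mul_norm]
  have : 0 < ‖x‖ := norm_pos_iff.mpr h
  positivity

lemma finset_indep_coeffs {B : Finset V}
    (hB : LinearIndependent ℝ (fun b : {x // x ∈ B} => (b : V)))
    (g : V → ℝ) (h : ∑ α ∈ B, g α • α = 0) : ∀ α ∈ B, g α = 0 := by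
  have h2 : ∑ b : {x // x ∈ B}, g b • (b : V) = 0 := by
    rw [Finset.sum_coe_sort B (fun α => g α • α)]; exact h
  intro α hα
  exact Fintype.linearIndependent_iff.mp hB (fun b => g b) h2 ⟨α, hα⟩

lemma diff_not_nonnegComb {B : Finset V}
    (hB : LinearIndependent ℝ (fun b : {x // x ∈ B} => (b : V)))
    {α β : V} (hα : α ∈ B) (hβ : β ∈ B) (hne : α ≠ β)
    (h : IsNonnegComb B (β - α)) : False := by
  classical
  obtain ⟨c, hc, hsum⟩ := h
  set g : V → ℝ := fun γ =>
    c γ - (if γ = β then 1 else 0) + (if γ = α then 1 else 0) with hg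
  have hzero : ∑ γ ∈ B, g γ • γ = 0 := by
    have e1 : (∑ γ ∈ B, (if γ = β then (1:ℝ) else 0) • γ) = β := by
      rw [show (fun γ => (if γ = β then (1:ℝ) else 0) • γ)
          = (fun γ => if γ = β then (1:ℝ) • γ else 0) from ?_,
        Finset.sum_ite_eq' B β (fun γ => (1:ℝ) • γ), if_pos hβ, one_smul]
      funext γ; by_cases hh : γ = β <;> simp [hh]
    have e2 : (∑ γ ∈ B, (if γ = α then (1:ℝ) else 0) • γ) = α := by
      rw [show (fun γ => (if γ = α then (1:ℝ) else 0) • γ)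
          = (fun γ => if γ = α then (1:ℝ) • γ else 0) from ?_,
        Finset.sum_ite_eq' B α (fun γ => (1:ℝ) • γ), if_pos hα, one_smul]
      funext γ; by_cases hh : γ = α <;> simp [hh]
    simp only [hg, sub_smul, add_smul]
    rw [Finset.sum_add_distrib, Finset.sum_sub_distrib, e1, e2, ← hsum]
    abel
  have h0 := finset_indep_coeffs hB g hzero α hα
  rw [hg] at h0
  simp only [if_neg hne, if_pos rfl, if_true] at h0
  have := hc α
  linarith

lemma inner_base_nonpos (P : RootSystemData V) {α β : V}
    (hα : α ∈ P.B) (hβ : β ∈ P.B) (hne : α ≠ β) : ⟪α, β⟫ ≤ 0 := by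
  by_contra hpos
  push_neg at hpos
  have hαR := P.base_subset hα
  have hβR := P.base_subset hβ
  have hα0 : α ≠ 0 := fun h => P.zero_not_mem (h ▸ hαR)
  have hβ0 : β ≠ 0 := fun h => P.zero_not_mem (h ▸ hβR)
  have hαα : (0:ℝ) < ⟪α,α⟫ := my_inner_self_pos α hα0
  have hββ : (0:ℝ) < ⟪β,β⟫ := my_inner_self_pos β hβ0
  obtain ⟨n, hn⟩ := P.crystallographic α hαR β hβR
  obtain ⟨m, hm⟩ := P.crystallographic β hβR α hαR
  rw [real_inner_comm α β] at hm
  have hn1 : 1 ≤ n := by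
    have h' : (0:ℝ) < (n:ℝ) := by nlinarith
    have : (0:ℤ) < n := by exact_mod_cast h'
    omega
  have hm1 : 1 ≤ m := by
    have h' : (0:ℝ) < (m:ℝ) := by nlinarith
    have : (0:ℤ) < m := by exact_mod_cast h'
    omega
  have hcontra : False := by
    by_cases h1 : n = 1
    · -- β - α ∈ R
      have hrefl : reflVec α β = β - α := by
        unfold reflVec
        rw [hn, h1]
        rw [Int.cast_one, one_mul, div_self (ne_of_gt hαα), one_smul]
      have hmem : β - α ∈ P.R := hrefl ▸ P.reflection_mem α hαR β hβR
      rcases P.pos_or_neg _ hmem with hcase | hcase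
      · exact diff_not_nonnegComb P.base_indep hα hβ hne hcase
      · rw [neg_sub] at hcase
        exact diff_not_nonnegComb P.base_indep hβ hα hne.symm hcase
    · by_cases h2 : m = 1
      · have hrefl : reflVec β α = α - β := by
          unfold reflVec
          rw [real_inner_comm α β, hm, h2]
          rw [Int.cast_one, one_mul, div_self (ne_of_gt hββ), one_smul]
        have hmem : α - β ∈ P.R := hrefl ▸ P.reflection_mem β hβR α hαR
        rcases P.pos_or_neg _ hmem with hcase | hcase
        · exact diff_not_nonnegComb P.base_indep hβ hα hne.symm hcase
        · rw [neg_sub] at hcase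
          exact diff_not_nonnegComb P.base_indep hα hβ hne hcase
      · -- n ≥ 2, m ≥ 2
        have hn2 : 2 ≤ n := by omega
        have hm2 : 2 ≤ m := by omega
        have hCS : ⟪α,β⟫ * ⟪α,β⟫ ≤ ⟪α,α⟫ * ⟪β,β⟫ := real_inner_mul_inner_self_le α β
        have hnm : (n:ℝ) * m * (⟪α,α⟫ * ⟪β,β⟫) = 4 * (⟪α,β⟫ * ⟪α,β⟫) := by
          nlinarith [hn, hm]
        have h4 : (n:ℝ) * m ≤ 4 := by nlinarith [mul_pos hαα hββ, hCS]
        have hn2' : (2:ℝ) ≤ (n:ℝ) := by exact_mod_cast hn2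
        have hm2' : (2:ℝ) ≤ (m:ℝ) := by exact_mod_cast hm2
        have heq4 : (n:ℝ) * m = 4 := by nlinarith
        have hne2 : (n:ℝ) = 2 ∧ (m:ℝ) = 2 := by constructor <;> nlinarith
        -- ⟪α,β⟫ = ⟪α,α⟫ = ⟪β,β⟫
        have e1 : ⟪α,β⟫ = ⟪α,α⟫ := by rw [hne2.1] at hn; linarith
        have e2 : ⟪α,β⟫ = ⟪β,β⟫ := by rw [hne2.2] at hm; linarith
        have : α = β := by
          have hz : ⟪α - β, α - β⟫ = (0:ℝ) := by
            rw [inner_sub_sub_self]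
            have e3 : ⟪β, α⟫ = ⟪α, β⟫ := real_inner_comm α β
            linarith
          have := inner_self_eq_zero.mp hz
          exact sub_eq_zero.mp this
        exact hne this
  exact hcontra


lemma prod_s_sub_mem (P : RootSystemData V) :
    ∀ (l : List V), (∀ β ∈ l, β ∈ P.B) → ∀ x : V,
    (l.map P.s).prod x - x ∈ Submodule.span ℝ {β : V | β ∈ l} := by
  intro l
  induction l with
  | nil => intro _ x; simp
  | cons β t ih =>
    intro hl x
    have hβB : β ∈ P.B := hl β List.mem_cons_self
    have hβR : β ∈ P.R := P.base_subset hβB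
    set y := (t.map P.s).prod x with hy
    have hmul : ((β :: t).map P.s).prod x = P.s β y := by
      rw [List.map_cons, List.prod_cons]
      rfl
    have hsy : P.s β y = y - ((2 * ⟪β, y⟫)/⟪β,β⟫) • β := P.s_apply β hβR y
    have h1 : y - x ∈ Submodule.span ℝ {γ : V | γ ∈ t} :=
      ih (fun γ hγ => hl γ (List.mem_cons_of_mem β hγ)) x
    have hsubset : ({γ : V | γ ∈ t} : Set V) ⊆ {γ : V | γ ∈ β :: t} :=
      fun γ hγ => List.mem_cons_of_mem β hγ
    have h1' : y - x ∈ Submodule.span ℝ {γ : V | γ ∈ β :: t} :=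
      Submodule.span_mono hsubset h1
    rw [hmul, hsy]
    have hβmem : β ∈ Submodule.span ℝ {γ : V | γ ∈ β :: t} :=
      Submodule.subset_span List.mem_cons_self
    have hre : y - ((2 * ⟪β, y⟫)/⟪β,β⟫) • β - x
        = (y - x) - ((2 * ⟪β, y⟫)/⟪β,β⟫) • β := by abel
    rw [hre]
    exact Submodule.sub_mem _ h1' (Submodule.smul_mem _ _ hβmem)

end Aux

/-- Let `R` be an irreducible finite reduced crystallographic root
system with base `B` of cardinality `r` and Weyl group `W`. Let `λ` be a
nonzero dominant element of the rational span of `R` and let `w ∈ W` be a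
product of fewer than `r` simple reflections. Then `w(λ)` is not of the form
`-Σ_{α∈B} a_α α` with all `a_α ≥ 0`. -/
theorem image_dominant_not_antidominant {V : Type*} [NormedAddCommGroup V]
    [InnerProductSpace ℝ V] (P : RootSystemData V)
    (hirr : (dynkinOn P.B).Connected)
    (lam : V) (hne : lam ≠ 0)
    (hratspan : ∃ c : V → ℚ, lam = ∑ α ∈ P.R, (c α : ℝ) • α)
    (hdom : ∀ α ∈ P.B, 0 ≤ 2 * ⟪lam, α⟫ / ⟪α, α⟫)
    (w : V ≃ₗ[ℝ] V)
    (hw : ∃ l : List V, (∀ β ∈ l, β ∈ P.B) ∧ l.length < P.B.card ∧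
      w = (l.map P.s).prod) :
    ¬ ∃ a : V → ℝ, (∀ α ∈ P.B, 0 ≤ a α) ∧
        w lam = -∑ α ∈ P.B, a α • α := by
  classical
  -- positivity of inner squares on the base
  have hBne : ∀ α ∈ P.B, α ≠ 0 := fun α hα h0 =>
    P.zero_not_mem (h0 ▸ P.base_subset hα)
  have hBpos : ∀ α ∈ P.B, (0:ℝ) < ⟪α,α⟫ := fun α hα =>
    my_inner_self_pos α (hBne α hα)
  -- dominance in plain form
  have hdomin : ∀ α ∈ P.B, (0:ℝ) ≤ ⟪lam, α⟫ := by
    intro α hα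
    have hd := hdom α hα
    have hp := hBpos α hα
    have h2 : (0:ℝ) ≤ 2 * ⟪lam, α⟫ := by
      have := mul_nonneg hd hp.le
      rwa [div_mul_cancel₀ _ (ne_of_gt hp)] at this
    linarith
  -- lam lies in the span of the base
  have hspanB : ∀ γ ∈ P.R, γ ∈ Submodule.span ℝ (P.B : Set V) := by
    intro γ hγ
    rcases P.pos_or_neg γ hγ with ⟨c, hc, h⟩ | ⟨c, hc, h⟩
    · rw [h]
      exact Submodule.sum_smul_mem _ _ (fun α hα => Submodule.subset_span hα)
    · have : -γ ∈ Submodule.span ℝ (P.B : Set V) := by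
        rw [h]
        exact Submodule.sum_smul_mem _ _ (fun α hα => Submodule.subset_span hα)
      simpa using Submodule.neg_mem _ this
  have hlamspan : lam ∈ Submodule.span ℝ (P.B : Set V) := by
    obtain ⟨c, hc⟩ := hratspan
    rw [hc]
    exact Submodule.sum_smul_mem _ _ (fun α hα => hspanB α hα)
  obtain ⟨f, -, hf⟩ := Submodule.mem_span_finset.mp hlamspan
  -- the coefficients of lam are nonnegative
  set p : V → ℝ := fun α => max (f α) 0 with hp
  set q : V → ℝ := fun α => max (-f α) 0 with hq
  have hpq : ∀ α, f α + q α = p α := by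
    intro α
    rcases le_or_gt (f α) 0 with h | h
    · simp [hp, hq, max_eq_right h, max_eq_left (by linarith : 0 ≤ -f α)]
    · simp [hp, hq, max_eq_left h.le, max_eq_right (by linarith : -f α ≤ 0)]
  have hpq0 : ∀ α, p α * q α = 0 := by
    intro α
    rcases le_or_gt (f α) 0 with h | h
    · simp [hp, max_eq_right h]
    · simp [hq, max_eq_right (by linarith : -f α ≤ 0)]
  have hp0 : ∀ α, 0 ≤ p α := fun α => le_max_right _ _
  have hq0 : ∀ α, 0 ≤ q α := fun α => le_max_right _ _
  set μ : V := ∑ α ∈ P.B, q α • α with hμ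
  have hlamμ : lam + μ = ∑ α ∈ P.B, p α • α := by
    rw [hμ, ← hf, ← Finset.sum_add_distrib]
    refine Finset.sum_congr rfl fun α _ => ?_
    rw [← add_smul, hpq α]
  have hinner1 : (0:ℝ) ≤ ⟪lam, μ⟫ := by
    rw [hμ, inner_sum]
    refine Finset.sum_nonneg fun α hα => ?_
    rw [real_inner_smul_right]
    exact mul_nonneg (hq0 α) (hdomin α hα)
  have hinner2 : ⟪lam + μ, μ⟫ ≤ 0 := by
    rw [hlamμ, hμ, sum_inner]
    refine Finset.sum_nonpos fun α hα => ?_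
    rw [real_inner_smul_left, inner_sum, Finset.mul_sum]
    refine Finset.sum_nonpos fun β hβ => ?_
    rw [real_inner_smul_right]
    by_cases hab : α = β
    · subst hab
      have : p α * (q α * ⟪α,α⟫) = (p α * q α) * ⟪α,α⟫ := by ring
      rw [this, hpq0 α, zero_mul]
    · have h1 : ⟪α, β⟫ ≤ 0 := inner_base_nonpos P hα hβ hab
      have h2 : p α * q β * ⟪α,β⟫ ≤ 0 :=
        mul_nonpos_iff.mpr (Or.inl ⟨mul_nonneg (hp0 α) (hq0 β), h1⟩)
      rw [← mul_assoc]
      exact h2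
  have hμ0 : μ = 0 := by
    have h1 : ⟪lam, μ⟫ + ⟪μ, μ⟫ ≤ 0 := by
      rw [← inner_add_left]; exact hinner2
    have h2 : ⟪μ, μ⟫ = (0:ℝ) := le_antisymm (by linarith) real_inner_self_nonneg
    exact inner_self_eq_zero.mp h2
  have hq_zero : ∀ α ∈ P.B, q α = 0 :=
    finset_indep_coeffs P.base_indep q (by rw [← hμ, hμ0])
  have hfnonneg : ∀ α ∈ P.B, 0 ≤ f α := by
    intro α hα
    have h2 : max (-f α) 0 = 0 := hq_zero α hα
    by_contra hcon
    push_neg at hcon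
    rw [max_eq_left (by linarith : (0:ℝ) ≤ -f α)] at h2
    linarith
  -- some coefficient is positive
  have hex : ∃ β₀ ∈ P.B, 0 < f β₀ := by
    by_contra hcon
    push_neg at hcon
    apply hne
    rw [← hf]
    refine Finset.sum_eq_zero fun α hα => ?_
    have : f α = 0 := le_antisymm (hcon α hα) (hfnonneg α hα)
    rw [this, zero_smul]
  obtain ⟨β₀, hβ₀B, hβ₀pos⟩ := hex
  -- positivity propagates along edges of the Dynkin diagram
  have step : ∀ a b : {x // x ∈ P.B}, (dynkinOn P.B).Adj a b →
      0 < f (a : V) → 0 < f (b : V) := by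
    intro a b hab hfa
    by_contra hfb
    have hfb0 : f (b : V) = 0 := le_antisymm (not_lt.mp hfb) (hfnonneg _ b.2)
    have hlamb : ⟪lam, (b : V)⟫ = ∑ γ ∈ P.B, f γ * ⟪γ, (b : V)⟫ := by
      rw [← hf, sum_inner]
      exact Finset.sum_congr rfl fun γ _ => real_inner_smul_left _ _ _
    have hne_ab : (a : V) ≠ (b : V) := fun h => hab.1 (Subtype.coe_injective h)
    have hlt : ∑ γ ∈ P.B, f γ * ⟪γ, (b : V)⟫ < ∑ γ ∈ P.B, (0:ℝ) := by
      refine Finset.sum_lt_sum ?_ ⟨(a : V), a.2, ?_⟩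
      · intro γ hγ
        by_cases hγb : γ = (b : V)
        · subst hγb; rw [hfb0, zero_mul]
        · exact mul_nonpos_iff.mpr (Or.inl ⟨(hfnonneg γ hγ),
            inner_base_nonpos P hγ b.2 hγb⟩)
      · have h1 : ⟪(a : V), (b : V)⟫ ≤ 0 := inner_base_nonpos P a.2 b.2 hne_ab
        have h2 : ⟪(a : V), (b : V)⟫ ≠ 0 := hab.2
        have h3 : ⟪(a : V), (b : V)⟫ < 0 := lt_of_le_of_ne h1 h2
        exact mul_neg_of_pos_of_neg hfa h3
    rw [Finset.sum_const_zero] at hlt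
    rw [← hlamb] at hlt
    exact absurd (hdomin _ b.2) (not_le.mpr hlt)
  have reach : ∀ a b : {x // x ∈ P.B}, (dynkinOn P.B).Reachable a b →
      0 < f (a : V) → 0 < f (b : V) := by
    intro a b h
    obtain ⟨pw⟩ := h
    induction pw with
    | nil => exact id
    | cons h' p' ih => exact fun h0 => ih (step _ _ h' h0)
  have hfpos : ∀ α ∈ P.B, 0 < f α := fun α hα =>
    reach ⟨β₀, hβ₀B⟩ ⟨α, hα⟩ (hirr.preconnected _ _) hβ₀pos
  -- now use the expression of w as a short product
  obtain ⟨l, hlB, hlen, hwprod⟩ := hw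
  rintro ⟨a, ha, heq⟩
  have hmove : w lam - lam ∈ Submodule.span ℝ {β : V | β ∈ l} := by
    rw [hwprod]
    exact prod_s_sub_mem P l hlB lam
  rw [show {β : V | β ∈ l} = ((l.toFinset : Finset V) : Set V) by
    rw [List.coe_toFinset]] at hmove
  obtain ⟨g, -, hg⟩ := Submodule.mem_span_finset.mp hmove
  have hsub : l.toFinset ⊆ P.B := fun γ hγ => hlB γ (List.mem_toFinset.mp hγ)
  have hexα : ∃ α₀ ∈ P.B, α₀ ∉ l.toFinset := by
    by_contra hcon
    push_neg at hcon
    have h1 : P.B ⊆ l.toFinset := hcon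
    have h2 := Finset.card_le_card h1
    have h3 := List.toFinset_card_le l
    omega
  obtain ⟨α₀, hα₀B, hα₀l⟩ := hexα
  set G : V → ℝ := fun γ => f γ + a γ + (if γ ∈ l.toFinset then g γ else 0) with hG
  have hGzero : ∑ γ ∈ P.B, G γ • γ = 0 := by
    have e1 : ∑ γ ∈ P.B, (if γ ∈ l.toFinset then g γ else 0) • γ
        = ∑ γ ∈ l.toFinset, g γ • γ := by
      rw [← Finset.sum_subset hsub (fun x _ hx => by rw [if_neg hx, zero_smul])]
      exact Finset.sum_congr rfl fun γ hγ => by rw [if_pos hγ]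
    simp only [hG, add_smul]
    rw [Finset.sum_add_distrib, Finset.sum_add_distrib, e1, hg, hf, heq]
    abel
  have hfinal := finset_indep_coeffs P.base_indep G hGzero α₀ hα₀B
  rw [hG] at hfinal
  simp only [if_neg hα₀l] at hfinal
  have h1 := hfpos α₀ hα₀B
  have h2 := ha α₀ hα₀B
  linarith
end

section
/- Let R be a finite reduced crystallographic root system with base B, Weyl group W, length function ℓ, and let ρ be the half-sum of the positive roots. If w ∈ W has ℓ(w) = 2, then there is no root γ ∈ R with ρ − w(ρ) = 2γ. -/
open scoped RealInnerProductSpace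

variable {V : Type*} [NormedAddCommGroup V] [InnerProductSpace ℝ V]

section Helpers

variable {P : RootSystemData V}

lemma root_ne_zero {α : V} (h : α ∈ P.R) : α ≠ 0 := fun e => P.zero_not_mem (e ▸ h)

lemma inner_self_pos_of_root {α : V} (h : α ∈ P.R) : 0 < ⟪α, α⟫ :=
  lt_of_le_of_ne real_inner_self_nonneg (Ne.symm (inner_self_ne_zero.mpr (root_ne_zero h)))

lemma coeff_zero {f : V → ℝ} (h : ∑ x ∈ P.B, f x • x = 0) : ∀ x ∈ P.B, f x = 0 := by
  intro x hx
  have h1 := (Fintype.linearIndependent_iff.mp P.base_indep) (fun b => f b)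
  have h2 : ∑ i : {x // x ∈ P.B}, f (i : V) • (i : V) = 0 := by
    rw [Finset.sum_coe_sort P.B (fun x => f x • x)]; exact h
  exact h1 h2 ⟨x, hx⟩

lemma coeff_unique {f g : V → ℝ} (h : ∑ x ∈ P.B, f x • x = ∑ x ∈ P.B, g x • x) :
    ∀ x ∈ P.B, f x = g x := by
  intro x hx
  have h0 : ∑ x ∈ P.B, (f x - g x) • x = 0 := by
    simp_rw [sub_smul, Finset.sum_sub_distrib, h, sub_self]
  have := coeff_zero h0 x hx
  linarith

lemma single_sum [DecidableEq V] {α : V} (hα : α ∈ P.B) (a : ℝ) :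
    ∑ x ∈ P.B, (if x = α then a else 0) • x = a • α := by
  have : ∀ x ∈ P.B, (if x = α then a else 0) • x = (if x = α then a • x else 0) := by
    intro x _; by_cases h : x = α <;> simp [h]
  rw [Finset.sum_congr rfl this, Finset.sum_ite_eq' P.B α (fun x => a • x), if_pos hα]

lemma pair_sum [DecidableEq V] {α β : V} (hα : α ∈ P.B) (hβ : β ∈ P.B) (hne : α ≠ β)
    (a b : ℝ) :
    ∑ x ∈ P.B, (if x = α then a else if x = β then b else 0) • x = a • α + b • β := by
  have : ∀ x ∈ P.B, (if x = α then a else if x = β then b else 0) • x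
      = (if x = α then a • x else 0) + (if x = β then b • x else 0) := by
    intro x _
    by_cases h1 : x = α
    · rw [h1]; simp [hne]
    · by_cases h2 : x = β <;> simp [h1, h2, Ne.symm hne]
  rw [Finset.sum_congr rfl this, Finset.sum_add_distrib,
      Finset.sum_ite_eq' P.B α (fun x => a • x), Finset.sum_ite_eq' P.B β (fun x => b • x),
      if_pos hα, if_pos hβ]

lemma pair_not_root {α β : V} (hα : α ∈ P.B) (hβ : β ∈ P.B) (hne : α ≠ β)
    {a b : ℝ} (ha : a < 0) (hb : 0 < b) : a • α + b • β ∉ P.R := by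
  classical
  intro hmem
  rcases P.pos_or_neg _ hmem with ⟨c, hc, hrep⟩ | ⟨c, hc, hrep⟩
  · have heq : ∑ x ∈ P.B, c x • x = ∑ x ∈ P.B, (if x = α then a else if x = β then b else 0) • x := by
      rw [pair_sum hα hβ hne, ← hrep]
    have := coeff_unique heq α hα
    rw [if_pos rfl] at this
    have := hc α; linarith
  · have heq : ∑ x ∈ P.B, c x • x
        = ∑ x ∈ P.B, (if x = α then -a else if x = β then -b else 0) • x := by
      rw [pair_sum hα hβ hne, ← hrep]; module
    have := coeff_unique heq β hβ
    rw [if_neg (Ne.symm hne), if_pos rfl] at this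
    have := hc β; linarith

lemma pair_indep {α β : V} (hα : α ∈ P.B) (hβ : β ∈ P.B) (hne : α ≠ β)
    {a b : ℝ} (h : a • α + b • β = 0) : a = 0 ∧ b = 0 := by
  classical
  have heq : ∑ x ∈ P.B, (if x = α then a else if x = β then b else 0) • x
      = ∑ x ∈ P.B, (0 : ℝ) • x := by
    rw [pair_sum hα hβ hne, h]
    simp
  have hA := coeff_unique heq α hα
  have hB := coeff_unique heq β hβ
  rw [if_pos rfl] at hA
  rw [if_neg (Ne.symm hne), if_pos rfl] at hB
  exact ⟨hA, hB⟩

end Helpers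
section Helpers2

variable {P : RootSystemData V}

lemma reflVec_self {α : V} (hα : α ≠ 0) : reflVec α α = -α := by
  have hA : ⟪α, α⟫ ≠ 0 := inner_self_ne_zero.mpr hα
  unfold reflVec
  rw [mul_div_assoc, div_self hA, mul_one]
  module

lemma reflVec_invol {α : V} (hα : α ≠ 0) (x : V) : reflVec α (reflVec α x) = x := by
  have hA : ⟪α, α⟫ ≠ 0 := inner_self_ne_zero.mpr hα
  unfold reflVec
  rw [inner_sub_right, real_inner_smul_right]
  rw [show ⟪α, x⟫ - 2 * ⟪α, x⟫ / ⟪α, α⟫ * ⟪α, α⟫ = -⟪α, x⟫ by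
    field_simp; ring]
  rw [show 2 * -⟪α, x⟫ = -(2 * ⟪α, x⟫) by ring, neg_div, neg_smul]
  module

lemma simple_inner_nonpos {α β : V} (hα : α ∈ P.B) (hβ : β ∈ P.B) (hne : α ≠ β) :
    ⟪α, β⟫ ≤ 0 := by
  by_contra hpos
  push_neg at hpos
  obtain ⟨n, hn⟩ := P.crystallographic α (P.base_subset hα) β (P.base_subset hβ)
  have hA : 0 < ⟪α, α⟫ := inner_self_pos_of_root (P.base_subset hα)
  have hn1 : (1 : ℝ) ≤ (n : ℝ) := by
    have h0 : (0 : ℝ) < (n : ℝ) := by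
      by_contra hc; push_neg at hc; nlinarith
    have h0' : 0 < n := by exact_mod_cast h0
    exact_mod_cast h0'
  have hδ : reflVec α β ∈ P.R :=
    P.reflection_mem α (P.base_subset hα) β (P.base_subset hβ)
  have hform : reflVec α β = (-(n : ℝ)) • α + (1 : ℝ) • β := by
    unfold reflVec
    rw [hn, mul_div_assoc, div_self (ne_of_gt hA), mul_one]
    module
  rw [hform] at hδ
  exact pair_not_root hα hβ hne (by linarith) one_pos hδ

lemma cs_aux {α β : V} (t : ℝ) :
    ⟪β - t • α, β - t • α⟫ = ⟪β, β⟫ - 2 * t * ⟪α, β⟫ + t ^ 2 * ⟪α, α⟫ := by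
  simp only [inner_sub_left, inner_sub_right, real_inner_smul_left, real_inner_smul_right]
  rw [real_inner_comm β α]; ring

lemma cs_strict {α β : V} (hα : α ∈ P.B) (hβ : β ∈ P.B) (hne : α ≠ β) :
    ⟪α, β⟫ ^ 2 < ⟪α, α⟫ * ⟪β, β⟫ := by
  have hA : 0 < ⟪α, α⟫ := inner_self_pos_of_root (P.base_subset hα)
  have hv : β - (⟪α, β⟫ / ⟪α, α⟫) • α ≠ 0 := by
    intro h
    have h' : (-(⟪α, β⟫ / ⟪α, α⟫)) • α + (1 : ℝ) • β = 0 := by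
      rw [← h]; module
    exact one_ne_zero (pair_indep hα hβ hne h').2
  have hpos : 0 < ⟪β - (⟪α, β⟫ / ⟪α, α⟫) • α, β - (⟪α, β⟫ / ⟪α, α⟫) • α⟫ :=
    lt_of_le_of_ne real_inner_self_nonneg (Ne.symm (inner_self_ne_zero.mpr hv))
  rw [cs_aux] at hpos
  have htA : (⟪α, β⟫ / ⟪α, α⟫) * ⟪α, α⟫ = ⟪α, β⟫ := div_mul_cancel₀ _ (ne_of_gt hA)
  nlinarith [mul_pos hA hpos]

end Helpers2
section Helpers3

variable {P : RootSystemData V}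

lemma mem_posRoots {β : V} :
    β ∈ posRoots P ↔ β ∈ P.R ∧ IsNonnegComb P.B β :=
  @Finset.mem_filter V (fun v => IsNonnegComb P.B v) (Classical.decPred _) P.R β

lemma simple_mem_pos {α : V} (hα : α ∈ P.B) : α ∈ posRoots P := by
  classical
  rw [mem_posRoots]
  refine ⟨P.base_subset hα, ⟨fun x => if x = α then 1 else 0, ?_, ?_⟩⟩
  · intro x; by_cases h : x = α <;> simp [h]
  · rw [single_sum hα, one_smul]

lemma exists_pos_coeff {α β : V} (hα : α ∈ P.B) (hβR : β ∈ P.R) (hne : β ≠ α)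
    {c : V → ℝ} (hc : ∀ x, 0 ≤ c x) (hrep : β = ∑ x ∈ P.B, c x • x) :
    ∃ j ∈ P.B, j ≠ α ∧ 0 < c j := by
  classical
  by_contra h
  push_neg at h
  have hz : ∀ j ∈ P.B, j ≠ α → c j = 0 := fun j hj hjα =>
    le_antisymm (h j hj hjα) (hc j)
  have hβα : β = c α • α := by
    rw [hrep, show ∑ x ∈ P.B, c x • x = ∑ x ∈ P.B, (if x = α then c α else 0) • x from
      Finset.sum_congr rfl (fun x hx => by
        by_cases hxα : x = α
        · rw [hxα]; simp
        · rw [if_neg hxα, hz x hx hxα]), single_sum hα]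
  rcases P.reduced α (P.base_subset hα) (c α) (by rw [← hβα]; exact hβR) with h1 | h1
  · rw [h1, one_smul] at hβα; exact hne hβα
  · have := hc α; rw [h1] at this; linarith

lemma refl_mem_pos {α β : V} (hα : α ∈ P.B) (hβ : β ∈ posRoots P) (hne : β ≠ α) :
    reflVec α β ∈ posRoots P ∧ reflVec α β ≠ α := by
  classical
  obtain ⟨hβR, c, hc, hrep⟩ := (mem_posRoots).mp hβ
  obtain ⟨j, hj, hjα, hcj⟩ := exists_pos_coeff hα hβR hne hc hrep
  have hα0 : α ≠ 0 := root_ne_zero (P.base_subset hα)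
  have hδR : reflVec α β ∈ P.R := P.reflection_mem α (P.base_subset hα) β hβR
  set k : ℝ := (2 * ⟪α, β⟫) / ⟪α, α⟫ with hk
  have hδrep : reflVec α β = ∑ x ∈ P.B, (if x = α then c α - k else c x) • x := by
    have hstep : ∀ x ∈ P.B, (if x = α then c α - k else c x) • x
        = c x • x + (if x = α then -k else 0) • x := by
      intro x hx
      by_cases hxα : x = α
      · rw [hxα, if_pos rfl, if_pos rfl, sub_smul, neg_smul]; abel
      · rw [if_neg hxα, if_neg hxα, zero_smul, add_zero]
    rw [Finset.sum_congr rfl hstep, Finset.sum_add_distrib, ← hrep, single_sum hα]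
    unfold reflVec
    rw [← hk]
    module
  refine ⟨?_, ?_⟩
  · rw [mem_posRoots]
    refine ⟨hδR, ?_⟩
    rcases P.pos_or_neg _ hδR with hpos | hneg
    · exact hpos
    · exfalso
      obtain ⟨c', hc', hrep'⟩ := hneg
      have hsum : ∑ x ∈ P.B, (-(if x = α then c α - k else c x)) • x = -(reflVec α β) := by
        simp_rw [neg_smul]
        rw [Finset.sum_neg_distrib, ← hδrep]
      have heq : ∑ x ∈ P.B, c' x • x
          = ∑ x ∈ P.B, (-(if x = α then c α - k else c x)) • x := by
        rw [hsum, ← hrep']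
      have hj' := coeff_unique heq j hj
      rw [if_neg hjα] at hj'
      have := hc' j; linarith
  · intro hδα
    have hβnegα : β = -α := by
      have hinv := reflVec_invol hα0 β
      rw [hδα, reflVec_self hα0] at hinv
      exact hinv.symm
    have heq : ∑ x ∈ P.B, c x • x = ∑ x ∈ P.B, (if x = α then (-1 : ℝ) else 0) • x := by
      rw [single_sum hα, ← hrep, hβnegα]; module
    have hj' := coeff_unique heq j hj
    rw [if_neg hjα] at hj'
    linarith

lemma sum_reflVec {α : V} (hα : α ∈ P.B) :
    ∑ β ∈ posRoots P, reflVec α β = (∑ β ∈ posRoots P, β) - (2 : ℝ) • α := by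
  letI : DecidableEq V := Classical.decEq V
  have hα0 : α ≠ 0 := root_ne_zero (P.base_subset hα)
  have hαpos : α ∈ posRoots P := simple_mem_pos hα
  have herase : ∑ β ∈ (posRoots P).erase α, reflVec α β
      = ∑ β ∈ (posRoots P).erase α, β := by
    refine Finset.sum_nbij' (fun β => reflVec α β) (fun β => reflVec α β) ?_ ?_ ?_ ?_ ?_
    · intro β hβ
      rw [Finset.mem_erase] at hβ ⊢
      obtain ⟨h1, h2⟩ := refl_mem_pos hα hβ.2 hβ.1
      exact ⟨h2, h1⟩
    · intro β hβ
      rw [Finset.mem_erase] at hβ ⊢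
      obtain ⟨h1, h2⟩ := refl_mem_pos hα hβ.2 hβ.1
      exact ⟨h2, h1⟩
    · intro β _; exact reflVec_invol hα0 β
    · intro β _; exact reflVec_invol hα0 β
    · intro β _; rfl
  rw [← Finset.add_sum_erase _ _ hαpos, ← Finset.add_sum_erase _ (fun β => β) hαpos,
    herase, reflVec_self hα0, two_smul]
  abel

lemma s_rho {α : V} (hα : α ∈ P.B) : P.s α (halfSumPos P) = halfSumPos P - α := by
  have hsa := P.s_apply α (P.base_subset hα)
  unfold halfSumPos
  rw [map_smul, map_sum, Finset.sum_congr rfl (fun β _ => hsa β),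
    sum_reflVec hα, smul_sub, smul_smul]
  norm_num

end Helpers3
/-- Let `R` be a finite reduced crystallographic root system with
base `B`, Weyl group `W`, length function `ℓ`, and `ρ` the half-sum of the
positive roots. If `w ∈ W` has `ℓ(w) = 2`, then there is no root `γ ∈ R` with
`ρ - w(ρ) = 2γ`. -/
theorem rho_sub_w_rho_ne_two_smul_root {V : Type*} [NormedAddCommGroup V]
    [InnerProductSpace ℝ V] (P : RootSystemData V)
    (w : V ≃ₗ[ℝ] V) (hw : w ∈ weylGroup P)
    (hlen : lengthIn (simples P) w = 2) :
    ¬ ∃ γ ∈ P.R, halfSumPos P - w (halfSumPos P) = (2 : ℝ) • γ := by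
  rintro ⟨γ, hγR, hγ⟩
  -- extract a reduced word of length two
  set S : Set ℕ :=
    {n | ∃ l : List (V ≃ₗ[ℝ] V), l.length = n ∧ (∀ x ∈ l, x ∈ simples P) ∧ l.prod = w}
    with hS
  have hlen' : sInf S = 2 := hlen
  have hSne : S.Nonempty := by
    by_contra h
    rw [Set.not_nonempty_iff_eq_empty] at h
    rw [h, Nat.sInf_empty] at hlen'
    exact absurd hlen' (by norm_num)
  have hmem : (2 : ℕ) ∈ S := hlen' ▸ Nat.sInf_mem hSne
  obtain ⟨l, hl2, hlS, hlprod⟩ := hmem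
  obtain ⟨x, y, rfl⟩ := List.length_eq_two.mp hl2
  obtain ⟨a, haB', hax⟩ := hlS x (by simp)
  obtain ⟨b, hbB', hby⟩ := hlS y (by simp)
  have haB : a ∈ P.B := haB'
  have hbB : b ∈ P.B := hbB'
  have haR : a ∈ P.R := P.base_subset haB
  have hbR : b ∈ P.R := P.base_subset hbB
  have ha0 : a ≠ 0 := root_ne_zero haR
  have hAa : 0 < ⟪a, a⟫ := inner_self_pos_of_root haR
  have hAb : 0 < ⟪b, b⟫ := inner_self_pos_of_root hbR
  have hwprod : w = P.s a * P.s b := by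
    rw [← hlprod, ← hax, ← hby]; simp
  -- a ≠ b
  have hab : a ≠ b := by
    rintro rfl
    have hw1 : w = 1 := by
      apply LinearEquiv.ext
      intro v
      rw [hwprod]
      show P.s a (P.s a v) = v
      rw [P.s_apply a haR, P.s_apply a haR]
      exact reflVec_invol ha0 v
    have h0 : (0 : ℕ) ∈ S := ⟨[], rfl, by simp, by simp [hw1]⟩
    have := Nat.sInf_le h0
    omega
  -- the key identity  ρ - wρ = (1-n)•a + b
  obtain ⟨n, hn⟩ := P.crystallographic a haR b hbR
  obtain ⟨m, hm⟩ := P.crystallographic a haR γ hγR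
  obtain ⟨m', hm'⟩ := P.crystallographic b hbR γ hγR
  obtain ⟨n', hn'⟩ := P.crystallographic b hbR a haR
  have hsab : P.s a b = b - (n : ℝ) • a := by
    rw [P.s_apply a haR]
    unfold reflVec
    rw [hn, mul_div_assoc, div_self (ne_of_gt hAa), mul_one]
  have hwρ : w (halfSumPos P) = halfSumPos P - b + ((n : ℝ) - 1) • a := by
    rw [hwprod]
    show P.s a (P.s b (halfSumPos P)) = _
    rw [s_rho hbB, map_sub, s_rho haB, hsab]
    module
  have key : (1 - (n : ℝ)) • a + (1 : ℝ) • b = (2 : ℝ) • γ := by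
    rw [← hγ, hwρ]
    module
  -- inner products with a and b
  have hiA : ⟪a, (1 - (n : ℝ)) • a + (1 : ℝ) • b⟫ = ⟪a, (2 : ℝ) • γ⟫ := by rw [key]
  rw [inner_add_right, real_inner_smul_right, real_inner_smul_right,
    real_inner_smul_right, one_mul] at hiA
  have hiB : ⟪b, (1 - (n : ℝ)) • a + (1 : ℝ) • b⟫ = ⟪b, (2 : ℝ) • γ⟫ := by rw [key]
  rw [inner_add_right, real_inner_smul_right, real_inner_smul_right,
    real_inner_smul_right, one_mul] at hiB
  -- 2 - n = 2m
  have hmnR : ((2 : ℝ) - (n : ℝ)) * ⟪a, a⟫ = (2 * (m : ℝ)) * ⟪a, a⟫ := by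
    linear_combination 2 * hiA - hn + 2 * hm
  have hmn : (2 : ℤ) - n = 2 * m := by
    have := mul_right_cancel₀ (ne_of_gt hAa) hmnR
    exact_mod_cast this
  -- (1-n)n' + 2 = 2m'
  have hm'R : ((1 - (n : ℝ)) * (n' : ℝ) + 2) * ⟪b, b⟫ = (2 * (m' : ℝ)) * ⟪b, b⟫ := by
    linear_combination 2 * hiB - (1 - (n : ℝ)) * hn' + 2 * hm'
  have hm'Z : (1 - n) * n' + 2 = 2 * m' := by
    have := mul_right_cancel₀ (ne_of_gt hAb) hm'R
    exact_mod_cast this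
  -- n ≤ 0
  have hip : ⟪a, b⟫ ≤ 0 := simple_inner_nonpos haB hbB hab
  have hnle : n ≤ 0 := by
    have : (n : ℝ) ≤ 0 := by nlinarith
    exact_mod_cast this
  rcases eq_or_lt_of_le hnle with hn0 | hnneg
  · -- case n = 0
    have hn0' : (n : ℝ) = 0 := by exact_mod_cast hn0
    have hm1 : m = 1 := by omega
    have hδR : reflVec a γ ∈ P.R := P.reflection_mem a haR γ hγR
    have hrv : reflVec a γ = γ - a := by
      unfold reflVec
      rw [hm, hm1, mul_div_assoc, div_self (ne_of_gt hAa), mul_one]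
      norm_num
    have hγeq : γ = (2⁻¹ : ℝ) • ((1 - (n : ℝ)) • a + (1 : ℝ) • b) := by
      rw [key, smul_smul]; norm_num
    have hform : reflVec a γ = (-(2⁻¹ : ℝ)) • a + (2⁻¹ : ℝ) • b := by
      rw [hrv, hγeq, hn0']
      module
    rw [hform] at hδR
    exact pair_not_root haB hbB hab (by norm_num) (by norm_num) hδR
  · -- case n < 0
    have hn2 : n ≤ -2 := by omega
    have hipneg : ⟪a, b⟫ < 0 := by nlinarith [(show (n : ℝ) ≤ -2 by exact_mod_cast hn2)]
    have hba : ⟪b, a⟫ = ⟪a, b⟫ := real_inner_comm a b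
    have hn'neg : n' ≤ -1 := by
      have : (n' : ℝ) < 0 := by nlinarith
      have : n' < 0 := by exact_mod_cast this
      omega
    -- n' is even
    have heven : Even ((1 - n) * n') := ⟨m' - 1, by linarith⟩
    have hn'even : Even n' := by
      rcases Int.even_mul.mp heven with h | h
      · exfalso; obtain ⟨k, hk⟩ := h; omega
      · exact h
    have hn'2 : n' ≤ -2 := by
      obtain ⟨k, hk⟩ := hn'even; omega
    -- n * n' ≥ 4 contradicts strict Cauchy-Schwarz
    have h4 : (4 : ℝ) ≤ (n : ℝ) * (n' : ℝ) := by
      have : (4 : ℤ) ≤ n * n' := by nlinarith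
      exact_mod_cast this
    have hcs : ⟪a, b⟫ ^ 2 < ⟪a, a⟫ * ⟪b, b⟫ := cs_strict haB hbB hab
    have hsq : 4 * ⟪a, b⟫ ^ 2 = ((n : ℝ) * ⟪a, a⟫) * ((n' : ℝ) * ⟪b, b⟫) := by
      rw [← hn, ← hn', hba]; ring
    nlinarith [mul_pos hAa hAb]
end
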